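/- arXiv:1111.1128 — 6 statements merged into one kernel-verified Lean document; each statement's English description precedes it below -/
import Mathlib

section
/- For every real y ≥ π and each j ∈ {0, 1, 2}, the series ∑_{n=2}^∞ n^(2j+4) exp(-n^2 y) converges and satisfies ∑_{n=2}^∞ n^(2j+4) exp(-n^2 y) < 2^(2j+4) e^(-4y) C_j(y), where C_j(y) = (1 - 2^(j+2) e^(-2y))^(-1). -/
lemma nat_le_two_pow (n : ℕ) : n + 2 ≤ 2^(n+1) := by
  induction n with
  | zero => norm_num
  | succ k ih =>
    have : 2^(k+2) = 2 * 2^(k+1) := by ring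
    omega

lemma key_bound (y : ℝ) (hy : (3:ℝ) ≤ y) (j : ℕ) (hj : j ≤ 2) (n : ℕ) :
    ((n:ℝ)+2)^(2*j+4) ≤ 2^(2*j+4) * Real.exp ((n*(n+2)) * y) := by
  have h1 : ((n:ℝ)+2) ≤ 2^(n+1) := by
    have := nat_le_two_pow n
    calc ((n:ℝ)+2) = ((n+2 : ℕ) : ℝ) := by push_cast; ring
    _ ≤ ((2^(n+1) : ℕ) : ℝ) := by exact_mod_cast this
    _ = 2^(n+1) := by push_cast; ring
  have h2 : ((n:ℝ)+2)^(2*j+4) ≤ (2^(n+1))^(2*j+4) := by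
    apply pow_le_pow_left₀ (by positivity) h1
  have h3 : ((2:ℝ)^(n+1))^(2*j+4) = 2^(2*j+4) * (2^(2*j+4))^n := by
    rw [← pow_mul, ← pow_mul, ← pow_add]
    ring_nf
  have h4 : ((2:ℝ)^(2*j+4))^n ≤ (256:ℝ)^n := by
    apply pow_le_pow_left₀ (by positivity)
    calc (2:ℝ)^(2*j+4) ≤ 2^8 := by
          apply pow_le_pow_right₀ (by norm_num); omega
    _ = 256 := by norm_num
  have h256 : (256:ℝ) ≤ Real.exp 9 := by
    have he : (2:ℝ) ≤ Real.exp 1 := by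
      have := Real.exp_one_gt_d9; linarith
    have : (2:ℝ)^9 ≤ (Real.exp 1)^9 := pow_le_pow_left₀ (by norm_num) he 9
    rw [← Real.exp_nat_mul] at this
    norm_num at this ⊢
    linarith
  have h5 : (256:ℝ)^n ≤ Real.exp (9*n) := by
    calc (256:ℝ)^n ≤ (Real.exp 9)^n := pow_le_pow_left₀ (by norm_num) h256 n
    _ = Real.exp (9*n) := by rw [← Real.exp_nat_mul]; ring_nf
  have h6 : Real.exp (9*(n:ℝ)) ≤ Real.exp ((n*(n+2)) * y) := by
    apply Real.exp_le_exp.mpr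
    have hn : (0:ℝ) ≤ (n:ℝ) := Nat.cast_nonneg n
    have hnn : (n:ℝ) ≤ (n:ℝ)^2 := by
      have := Nat.le_self_pow (by norm_num : (2:ℕ) ≠ 0) n
      exact_mod_cast this
    nlinarith [mul_nonneg (sq_nonneg ((n:ℝ))) (by linarith : (0:ℝ) ≤ y - 3),
      mul_nonneg hn (by linarith : (0:ℝ) ≤ y - 3)]
  calc ((n:ℝ)+2)^(2*j+4) ≤ (2^(n+1))^(2*j+4) := h2
  _ = 2^(2*j+4) * (2^(2*j+4))^n := h3
  _ ≤ 2^(2*j+4) * (256:ℝ)^n := by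
      apply mul_le_mul_of_nonneg_left h4 (by positivity)
  _ ≤ 2^(2*j+4) * Real.exp (9*n) := by
      apply mul_le_mul_of_nonneg_left h5 (by positivity)
  _ ≤ 2^(2*j+4) * Real.exp ((n*(n+2)) * y) := by
      apply mul_le_mul_of_nonneg_left h6 (by positivity)

theorem stmt_2 (y : ℝ) (hy : Real.pi ≤ y) (j : ℕ) (hj : j ∈ ({0, 1, 2} : Set ℕ)) :
    Summable (fun n : ℕ => ((n : ℝ) + 2)^(2*j+4) * Real.exp (-((n : ℝ) + 2)^2 * y)) ∧
    (∑' n : ℕ, ((n : ℝ) + 2)^(2*j+4) * Real.exp (-((n : ℝ) + 2)^2 * y))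
      < 2^(2*j+4) * Real.exp (-4*y) * (1 - 2^(j+2) * Real.exp (-2*y))⁻¹ := by
  have hj2 : j ≤ 2 := by
    simp [Set.mem_insert_iff] at hj
    rcases hj with h | h | h <;> omega
  have hy3 : (3:ℝ) ≤ y := le_trans (by linarith [Real.pi_gt_three]) hy
  set a : ℕ → ℝ := fun n => ((n : ℝ) + 2)^(2*j+4) * Real.exp (-((n : ℝ) + 2)^2 * y) with ha
  set r : ℝ := 2^(j+2) * Real.exp (-2*y) with hr
  set b : ℕ → ℝ := fun n => 2^(2*j+4) * Real.exp (-4*y) * r^n with hb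
  have hr0 : 0 < r := by positivity
  have hr1 : r < 1 := by
    rw [hr]
    have h1 : (2:ℝ)^(j+2) ≤ 2^4 := by
      apply pow_le_pow_right₀ (by norm_num); omega
    have h2 : Real.exp (-2*y) < Real.exp (-4) := by
      apply Real.exp_lt_exp.mpr; linarith
    have h3 : Real.exp (-4) ≤ 1/16 := by
      have h16 : (16:ℝ) ≤ Real.exp 4 := by
        have : (2:ℝ)^4 ≤ (Real.exp 1)^4 := by
          apply pow_le_pow_left₀ (by norm_num)
          linarith [Real.exp_one_gt_d9]
        rw [← Real.exp_nat_mul] at this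
        norm_num at this ⊢
        linarith
      rw [Real.exp_neg, one_div]
      exact inv_anti₀ (by norm_num) h16
    calc (2:ℝ)^(j+2) * Real.exp (-2*y) ≤ 2^4 * Real.exp (-2*y) := by
          apply mul_le_mul_of_nonneg_right h1 (Real.exp_pos _).le
    _ < 2^4 * Real.exp (-4) := by
          apply mul_lt_mul_of_pos_left h2 (by norm_num)
    _ ≤ 2^4 * (1/16) := by
          apply mul_le_mul_of_nonneg_left h3 (by norm_num)
    _ = 1 := by norm_num
  -- pointwise bound a n ≤ b n
  have hab : ∀ n, a n ≤ b n := by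
    intro n
    have hkey := key_bound y hy3 j hj2 n
    have e1 : Real.exp ((n*(n+2)) * y) * Real.exp (-((n:ℝ)+2)^2 * y)
        = Real.exp (-4*y) * Real.exp (-2*y)^n := by
      rw [← Real.exp_nat_mul, ← Real.exp_add, ← Real.exp_add]
      ring_nf
    have step1 : a n ≤ 2^(2*j+4) * Real.exp (-4*y) * Real.exp (-2*y)^n := by
      have := mul_le_mul_of_nonneg_right hkey (Real.exp_pos (-((n:ℝ)+2)^2 * y)).le
      calc a n = ((n:ℝ)+2)^(2*j+4) * Real.exp (-((n:ℝ)+2)^2 * y) := rfl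
      _ ≤ 2^(2*j+4) * Real.exp ((n*(n+2)) * y) * Real.exp (-((n:ℝ)+2)^2 * y) := this
      _ = 2^(2*j+4) * (Real.exp ((n*(n+2)) * y) * Real.exp (-((n:ℝ)+2)^2 * y)) := by ring
      _ = 2^(2*j+4) * (Real.exp (-4*y) * Real.exp (-2*y)^n) := by rw [e1]
      _ = 2^(2*j+4) * Real.exp (-4*y) * Real.exp (-2*y)^n := by ring
    have step2 : Real.exp (-2*y)^n ≤ r^n := by
      apply pow_le_pow_left₀ (Real.exp_pos _).le
      rw [hr]
      have h4le : (4:ℝ) ≤ 2^(j+2) := by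
        calc (4:ℝ) = 2^2 := by norm_num
        _ ≤ 2^(j+2) := pow_le_pow_right₀ (by norm_num) (by omega)
      nlinarith [Real.exp_pos (-2*y)]
    calc a n ≤ 2^(2*j+4) * Real.exp (-4*y) * Real.exp (-2*y)^n := step1
    _ ≤ 2^(2*j+4) * Real.exp (-4*y) * r^n := by
        apply mul_le_mul_of_nonneg_left step2 (by positivity)
  have hsumb : Summable b := by
    apply Summable.mul_left
    exact summable_geometric_of_lt_one hr0.le hr1
  have hsuma : Summable a := by
    apply Summable.of_nonneg_of_le (fun n => by positivity) hab hsumb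
  refine ⟨hsuma, ?_⟩
  have hstrict : a 1 < b 1 := by
    have hkey := key_bound y hy3 j hj2 1
    have step1 : a 1 ≤ 2^(2*j+4) * Real.exp (-6*y) := by
      have e1 : Real.exp (((1:ℕ):ℝ)*(((1:ℕ):ℝ)+2) * y) * Real.exp (-(((1:ℕ):ℝ)+2)^2 * y)
          = Real.exp (-6*y) := by
        rw [← Real.exp_add]; norm_num; ring_nf
      have := mul_le_mul_of_nonneg_right hkey (Real.exp_pos (-(((1:ℕ):ℝ)+2)^2 * y)).le
      calc a 1 = (((1:ℕ):ℝ)+2)^(2*j+4) * Real.exp (-(((1:ℕ):ℝ)+2)^2 * y) := rfl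
      _ ≤ 2^(2*j+4) * Real.exp (((1:ℕ):ℝ)*(((1:ℕ):ℝ)+2) * y) * Real.exp (-(((1:ℕ):ℝ)+2)^2 * y) := this
      _ = 2^(2*j+4) * (Real.exp (((1:ℕ):ℝ)*(((1:ℕ):ℝ)+2) * y) * Real.exp (-(((1:ℕ):ℝ)+2)^2 * y)) := by ring
      _ = 2^(2*j+4) * Real.exp (-6*y) := by rw [e1]
    have step2 : 2^(2*j+4) * Real.exp (-6*y) < b 1 := by
      have hb1 : b 1 = 2^(2*j+4) * 2^(j+2) * Real.exp (-6*y) := by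
        simp only [hb, hr, pow_one]
        rw [show (-6*y : ℝ) = (-4*y) + (-2*y) by ring, Real.exp_add]
        ring
      rw [hb1]
      have h4le : (4:ℝ) ≤ 2^(j+2) := by
        calc (4:ℝ) = 2^2 := by norm_num
        _ ≤ 2^(j+2) := pow_le_pow_right₀ (by norm_num) (by omega)
      have hp : 0 < 2^(2*j+4) * Real.exp (-6*y) := by positivity
      calc 2^(2*j+4) * Real.exp (-6*y) = 1 * (2^(2*j+4) * Real.exp (-6*y)) := by ring
      _ < 2^(j+2) * (2^(2*j+4) * Real.exp (-6*y)) := by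
          exact mul_lt_mul_of_pos_right (by linarith) hp
      _ = 2^(2*j+4) * 2^(j+2) * Real.exp (-6*y) := by ring
    linarith
  have htsumb : ∑' n, b n = 2^(2*j+4) * Real.exp (-4*y) * (1 - r)⁻¹ := by
    rw [hb]
    rw [tsum_mul_left, tsum_geometric_of_lt_one hr0.le hr1]
  calc ∑' n, a n < ∑' n, b n := Summable.tsum_lt_tsum hab hstrict hsuma hsumb
  _ = 2^(2*j+4) * Real.exp (-4*y) * (1 - r)⁻¹ := htsumb
end

section
/- For every real y ≥ π and each j ∈ {0, 1, 2}, the series Υ_j(y) = e^y ∑_{n=2}^∞ n^2 p_{j+1}(n^2 y) exp(-n^2 y) converges absolutely and satisfies |Υ_j(y)| < 2^(4j+5) C_j(y) y^(j+1) e^(-3y), where C_j(y) = (1 - 2^(j+2) e^(-2y))^(-1). -/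
noncomputable def cvp : ℕ → ℝ → ℝ
  | 1, y => 2*y - 3
  | 2, y => -15 + 30*y - 8*y^2
  | 3, y => -75 + 330*y - 224*y^2 + 32*y^3
  | _, _ => 0

lemma cvp_bound (j : ℕ) (hj : j ≤ 2) (x : ℝ) (hx : 12 ≤ x) :
    |cvp (j+1) x| < 2^(2*j+1) * x^(j+1) := by
  interval_cases j <;>
  · rw [abs_lt]
    constructor <;> (simp only [cvp]; norm_num) <;> nlinarith

lemma sq_le_pow (k : ℕ) : ((k:ℝ)+3)^2 ≤ 2^(k+4) := by
  induction k with
  | zero => norm_num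
  | succ k ih =>
    have h2 : (2:ℝ)^(k+1+4) = 2 * 2^(k+4) := by ring
    push_cast
    rw [h2]
    have hk : (0:ℝ) ≤ (k:ℝ) := Nat.cast_nonneg k
    nlinarith

lemma exp3_gt : (16:ℝ) ≤ Real.exp 3 := by
  have h := Real.exp_one_gt_d9
  have h3 : Real.exp 3 = Real.exp 1 ^ 3 := by
    rw [← Real.exp_nat_mul]; norm_num
  rw [h3]
  nlinarith [Real.exp_pos 1, sq_nonneg (Real.exp 1)]

lemma aux (y : ℝ) (hy : 3 ≤ y) (j : ℕ) (hj : j ≤ 2) (n : ℕ) :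
    ((((n:ℝ)+2)^2)^(j+2)) ≤ 2^((j+2)*(n+2)) * Real.exp (((n:ℝ)+2)*(n:ℝ)*y) := by
  cases n with
  | zero =>
    simp only [Nat.cast_zero, zero_add, mul_zero, zero_mul, Real.exp_zero, mul_one]
    rw [← pow_mul, Nat.mul_comm]
  | succ k =>
    have hcast : ((k:ℕ)+1 : ℕ) = k+1 := rfl
    have h1 : (((k+1:ℕ):ℝ)+2)^2 ≤ 2^(k+4) := by
      push_cast
      have := sq_le_pow k
      nlinarith
    have h2 : ((((k+1:ℕ):ℝ)+2)^2)^(j+2) ≤ ((2:ℝ)^(k+4))^(j+2) :=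
      pow_le_pow_left₀ (by positivity) h1 _
    have h3 : ((2:ℝ)^(k+4))^(j+2) = 2^((j+2)*(k+3)) * 2^(j+2) := by
      rw [← pow_mul, ← pow_add]
      congr 1
      ring
    have h4 : (2:ℝ)^(j+2) ≤ Real.exp ((((k+1:ℕ):ℝ)+2)*((k+1:ℕ):ℝ)*y) := by
      have hle : (2:ℝ)^(j+2) ≤ 16 := by
        calc (2:ℝ)^(j+2) ≤ 2^4 := by
              apply pow_le_pow_right₀ (by norm_num)
              omega
          _ = 16 := by norm_num
      refine hle.trans (exp3_gt.trans (Real.exp_le_exp.mpr ?_))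
      push_cast
      have hk : (0:ℝ) ≤ (k:ℝ) := Nat.cast_nonneg k
      nlinarith [mul_nonneg (mul_nonneg hk hk) (by linarith : (0:ℝ) ≤ y)]
    calc ((((k+1:ℕ):ℝ)+2)^2)^(j+2) ≤ 2^((j+2)*(k+3)) * 2^(j+2) := h3 ▸ h2
      _ ≤ 2^((j+2)*(k+3)) * Real.exp ((((k+1:ℕ):ℝ)+2)*((k+1:ℕ):ℝ)*y) := by
          apply mul_le_mul_of_nonneg_left h4 (by positivity)
      _ = 2^((j+2)*(k+1+2)) * Real.exp ((((k+1:ℕ):ℝ)+2)*((k+1:ℕ):ℝ)*y) := by norm_num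

lemma key (y : ℝ) (hy : 3 ≤ y) (j : ℕ) (hj : j ≤ 2) (n : ℕ) :
    |Real.exp y * (((n:ℝ)+2)^2 * cvp (j+1) (((n:ℝ)+2)^2 * y)
        * Real.exp (-((n:ℝ)+2)^2 * y))|
      < 2^(4*j+5) * y^(j+1) * Real.exp (-3*y) * (2^(j+2) * Real.exp (-2*y))^n := by
  set m : ℝ := (n:ℝ)+2 with hm
  have hn0 : (0:ℝ) ≤ (n:ℝ) := Nat.cast_nonneg n
  have hmpos : (0:ℝ) < m := by rw [hm]; linarith
  have hx : (12:ℝ) ≤ m^2*y := by nlinarith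
  have hcvp := cvp_bound j hj (m^2*y) hx
  have habs : |Real.exp y * (m^2 * cvp (j+1) (m^2 * y) * Real.exp (-m^2 * y))|
      = Real.exp y * (m^2 * |cvp (j+1) (m^2 * y)| * Real.exp (-m^2 * y)) := by
    rw [abs_mul, abs_mul, abs_mul, abs_of_pos (Real.exp_pos _),
      abs_of_pos (Real.exp_pos _), abs_of_nonneg (sq_nonneg m)]
  rw [habs]
  have step1 : Real.exp y * (m^2 * |cvp (j+1) (m^2 * y)| * Real.exp (-m^2 * y))
      < Real.exp y * (m^2 * (2^(2*j+1) * (m^2*y)^(j+1)) * Real.exp (-m^2 * y)) := by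
    have hm2 : (0:ℝ) < m^2 := by positivity
    gcongr <;> first | exact hcvp | positivity
  refine step1.trans_le ?_
  -- main computation
  have H := aux y hy j hj n
  have H2 : (m^2)^(j+2) * Real.exp ((1-m^2)*y)
      ≤ 2^((j+2)*(n+2)) * Real.exp ((m*(n:ℝ) + (1 - m^2))*y) := by
    have := mul_le_mul_of_nonneg_right H (le_of_lt (Real.exp_pos ((1-m^2)*y)))
    calc (m^2)^(j+2) * Real.exp ((1-m^2)*y) ≤
        2^((j+2)*(n+2)) * Real.exp (m*(n:ℝ)*y) * Real.exp ((1-m^2)*y) := this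
      _ = 2^((j+2)*(n+2)) * Real.exp ((m*(n:ℝ) + (1 - m^2))*y) := by
          rw [mul_assoc, ← Real.exp_add]
          congr 1
          ring
  have e1 : Real.exp y * Real.exp (-m^2*y) = Real.exp ((1-m^2)*y) := by
    rw [← Real.exp_add]; congr 1; ring
  have lhs_eq : Real.exp y * (m^2 * (2^(2*j+1) * (m^2*y)^(j+1)) * Real.exp (-m^2 * y))
      = 2^(2*j+1) * y^(j+1) * ((m^2)^(j+2) * Real.exp ((1-m^2)*y)) := by
    rw [← e1, mul_pow]
    ring
  have rhs_eq : (2:ℝ)^(4*j+5) * y^(j+1) * Real.exp (-3*y) * (2^(j+2) * Real.exp (-2*y))^n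
      = 2^(2*j+1) * y^(j+1) * (2^((j+2)*(n+2)) * Real.exp ((m*(n:ℝ) + (1 - m^2))*y)) := by
    rw [mul_pow, ← Real.exp_nat_mul]
    have hp1 : (2:ℝ)^(4*j+5) = 2^(2*j+1) * 2^(2*j+4) := by
      rw [← pow_add]; congr 1; ring
    have hp2 : ((2:ℝ)^(j+2))^n = 2^((j+2)*n) := by rw [← pow_mul]
    have hp3 : (2:ℝ)^(2*j+4) * 2^((j+2)*n) = 2^((j+2)*(n+2)) := by
      rw [← pow_add]; congr 1; ring
    have he : Real.exp (-3*y) * Real.exp ((n:ℝ)*(-2*y)) = Real.exp ((m*(n:ℝ) + (1 - m^2))*y) := by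
      rw [← Real.exp_add, hm]
      congr 1
      push_cast
      ring
    calc (2:ℝ)^(4*j+5) * y^(j+1) * Real.exp (-3*y) * (((2:ℝ)^(j+2))^n * Real.exp ((n:ℝ)*(-2*y)))
        = (2^(2*j+1) * y^(j+1)) * (((2:ℝ)^(2*j+4) * ((2:ℝ)^(j+2))^n)
            * (Real.exp (-3*y) * Real.exp ((n:ℝ)*(-2*y)))) := by rw [hp1]; ring
      _ = 2^(2*j+1) * y^(j+1) * (2^((j+2)*(n+2)) * Real.exp ((m*(n:ℝ) + (1 - m^2))*y)) := by
          rw [hp2, hp3, he]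
  rw [lhs_eq, rhs_eq]
  exact mul_le_mul_of_nonneg_left H2 (by positivity)

theorem stmt_3 (y : ℝ) (hy : Real.pi ≤ y) (j : ℕ) (hj : j ∈ ({0, 1, 2} : Set ℕ)) :
    Summable (fun n : ℕ =>
      |Real.exp y * (((n : ℝ) + 2)^2 * cvp (j+1) (((n : ℝ) + 2)^2 * y)
        * Real.exp (-((n : ℝ) + 2)^2 * y))|) ∧
    |Real.exp y * ∑' n : ℕ, ((n : ℝ) + 2)^2 * cvp (j+1) (((n : ℝ) + 2)^2 * y)
        * Real.exp (-((n : ℝ) + 2)^2 * y)|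
      < 2^(4*j+5) * (1 - 2^(j+2) * Real.exp (-2*y))⁻¹ * y^(j+1) * Real.exp (-3*y) := by
  have hy3 : (3:ℝ) ≤ y := le_trans (by linarith [Real.pi_gt_three]) hy
  have hj2 : j ≤ 2 := by
    simp only [Set.mem_insert_iff, Set.mem_singleton_iff] at hj
    rcases hj with h | h | h <;> omega
  set r : ℝ := 2^(j+2) * Real.exp (-2*y) with hr
  have hr0 : 0 < r := by positivity
  have hr1 : r < 1 := by
    have h16 : (2:ℝ)^(j+2) ≤ 16 := by
      calc (2:ℝ)^(j+2) ≤ 2^4 := by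
            apply pow_le_pow_right₀ (by norm_num); omega
        _ = 16 := by norm_num
    have h6 : (16:ℝ) < Real.exp (2*y) :=
      lt_of_le_of_lt exp3_gt (Real.exp_lt_exp.mpr (by linarith))
    have hle : r ≤ 16 * Real.exp (-2*y) :=
      mul_le_mul_of_nonneg_right h16 (Real.exp_pos _).le
    refine lt_of_le_of_lt hle ?_
    rw [show (-2*y:ℝ) = -(2*y) by ring, Real.exp_neg]
    calc (16:ℝ) * (Real.exp (2*y))⁻¹ = 16 / Real.exp (2*y) := by ring
      _ < 1 := (div_lt_one (Real.exp_pos _)).mpr h6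
  have hkey : ∀ n : ℕ,
      |Real.exp y * (((n : ℝ) + 2)^2 * cvp (j+1) (((n : ℝ) + 2)^2 * y)
        * Real.exp (-((n : ℝ) + 2)^2 * y))|
      < 2^(4*j+5) * y^(j+1) * Real.exp (-3*y) * r^n := fun n => key y hy3 j hj2 n
  have hg : Summable (fun n : ℕ => 2^(4*j+5) * y^(j+1) * Real.exp (-3*y) * r^n) :=
    (summable_geometric_of_lt_one hr0.le hr1).mul_left _
  have ha : Summable (fun n : ℕ =>
      |Real.exp y * (((n : ℝ) + 2)^2 * cvp (j+1) (((n : ℝ) + 2)^2 * y)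
        * Real.exp (-((n : ℝ) + 2)^2 * y))|) :=
    Summable.of_nonneg_of_le (fun n => abs_nonneg _) (fun n => (hkey n).le) hg
  refine ⟨ha, ?_⟩
  have h1 : |∑' n : ℕ, Real.exp y * (((n : ℝ) + 2)^2 * cvp (j+1) (((n : ℝ) + 2)^2 * y)
        * Real.exp (-((n : ℝ) + 2)^2 * y))|
      ≤ ∑' n : ℕ, |Real.exp y * (((n : ℝ) + 2)^2 * cvp (j+1) (((n : ℝ) + 2)^2 * y)
        * Real.exp (-((n : ℝ) + 2)^2 * y))| := by
    have ha' : Summable (fun n : ℕ => ‖Real.exp y * (((n : ℝ) + 2)^2 * cvp (j+1) (((n : ℝ) + 2)^2 * y)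
        * Real.exp (-((n : ℝ) + 2)^2 * y))‖) := by
      simp only [Real.norm_eq_abs]; exact ha
    have := norm_tsum_le_tsum_norm ha'
    simp only [Real.norm_eq_abs] at this
    exact this
  have h2 : ∑' n : ℕ, |Real.exp y * (((n : ℝ) + 2)^2 * cvp (j+1) (((n : ℝ) + 2)^2 * y)
        * Real.exp (-((n : ℝ) + 2)^2 * y))|
      < ∑' n : ℕ, 2^(4*j+5) * y^(j+1) * Real.exp (-3*y) * r^n :=
    Summable.tsum_lt_tsum (fun n => (hkey n).le) (hkey 0) ha hg
  have h3 : ∑' n : ℕ, 2^(4*j+5) * y^(j+1) * Real.exp (-3*y) * r^n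
      = 2^(4*j+5) * y^(j+1) * Real.exp (-3*y) * (1-r)⁻¹ := by
    rw [tsum_mul_left, tsum_geometric_of_lt_one hr0.le hr1]
  calc |Real.exp y * ∑' n : ℕ, ((n : ℝ) + 2)^2 * cvp (j+1) (((n : ℝ) + 2)^2 * y)
        * Real.exp (-((n : ℝ) + 2)^2 * y)|
      = |∑' n : ℕ, Real.exp y * (((n : ℝ) + 2)^2 * cvp (j+1) (((n : ℝ) + 2)^2 * y)
        * Real.exp (-((n : ℝ) + 2)^2 * y))| := by rw [tsum_mul_left]
    _ ≤ _ := h1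
    _ < _ := h2
    _ = 2^(4*j+5) * y^(j+1) * Real.exp (-3*y) * (1-r)⁻¹ := h3
    _ = 2^(4*j+5) * (1 - 2^(j+2) * Real.exp (-2*y))⁻¹ * y^(j+1) * Real.exp (-3*y) := by
        rw [hr]; ring
end

section
/- For every integer r ≥ 2, the polynomial W_r(y) = det [(p_{i+j-1}(y))_{i,j=1,…,r}] is divisible by y^(r(r-1)/2); that is, the coefficient of y^j in W_r(y) is zero for every 0 ≤ j ≤ r(r-1)/2 - 1. -/
open Polynomial

/-- The Csordas–Varga polynomials: `cv n` is `p_{n+1}`, where `p_1(y) = 2y - 3` and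
`p_{k+1}(y) = 4y p_k'(y) + (5 - 4y) p_k(y)`. -/
noncomputable def cv : ℕ → Polynomial ℝ
  | 0 => 2 * X - 3
  | (n+1) => 4 * X * (derivative (cv n)) + (5 - 4 * X) * (cv n)

/-- Applying `L - (4a+5)` to a polynomial divisible by `X^a` gives one divisible by `X^(a+1)`,
where `L p = 4X p' + (5-4X) p` is the Csordas–Varga operator. -/
lemma cvL_step (a : ℕ) (p : Polynomial ℝ) (h : X ^ a ∣ p) :
    X ^ (a+1) ∣ (4*X*(derivative p) + (5 - 4*X)*p - ((4*a+5 : ℕ) : Polynomial ℝ) * p) := by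
  obtain ⟨q, rfl⟩ := h
  refine ⟨4 * derivative q - 4 * q, ?_⟩
  rw [derivative_mul, derivative_X_pow]
  cases a with
  | zero => simp only [pow_zero, Nat.cast_zero]; push_cast; simp; ring
  | succ b =>
    have h1 : (b+1) - 1 = b := rfl
    rw [h1]
    push_cast
    rw [map_add, map_one, map_natCast]
    ring

/-- Row-reduced Csordas–Varga polynomials: `cvw a n = (∏_{i<a} (L - (4i+5))) (cv n)`. -/
noncomputable def cvw : ℕ → ℕ → Polynomial ℝ
  | 0, n => cv n
  | (a+1), n => cvw a (n+1) - ((4*a+5 : ℕ) : Polynomial ℝ) * cvw a n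

lemma cvw_shift (a n : ℕ) :
    cvw a (n+1) = 4*X*(derivative (cvw a n)) + (5 - 4*X)*(cvw a n) := by
  induction a generalizing n with
  | zero => simp [cvw, cv]
  | succ b ih =>
    have e : ∀ m, cvw (b+1) m = cvw b (m+1) - ((4*b+5 : ℕ) : Polynomial ℝ) * cvw b m :=
      fun m => rfl
    rw [e n, e (n+1), derivative_sub, derivative_mul, derivative_natCast, ih (n+1), ih n]
    ring

lemma dvd_cvw (a n : ℕ) : X ^ a ∣ cvw a n := by
  induction a generalizing n with
  | zero => simp
  | succ b ih =>
    have := cvL_step b (cvw b n) (ih n)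
    rwa [← cvw_shift] at this

/-- Coefficients of the row operations. -/
def cvco : ℕ → ℕ → ℝ
  | 0, 0 => 1
  | 0, (_+1) => 0
  | (a+1), 0 => -(4*a+5) * cvco a 0
  | (a+1), (i+1) => cvco a i - (4*a+5) * cvco a (i+1)

lemma cvco_gt' (a k : ℕ) : cvco a (a+1+k) = 0 := by
  induction a generalizing k with
  | zero => rw [show 0+1+k = k+1 by omega]; rfl
  | succ d ih =>
    rw [show d+1+1+k = (d+1+k)+1 by omega]
    show cvco d (d+1+k) - (4*(d:ℝ)+5) * cvco d (d+1+k+1) = 0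
    rw [ih k, show d+1+k+1 = d+1+(k+1) by omega, ih (k+1)]
    ring

lemma cvco_gt (a i : ℕ) (h : a < i) : cvco a i = 0 := by
  obtain ⟨k, rfl⟩ : ∃ k, i = a + 1 + k := ⟨i - (a+1), by omega⟩
  exact cvco_gt' a k

lemma cvco_self (a : ℕ) : cvco a a = 1 := by
  induction a with
  | zero => rfl
  | succ b ih =>
    show cvco b b - (4*(b:ℝ)+5) * cvco b (b+1) = 1
    rw [ih, cvco_gt b (b+1) (by omega)]
    ring

lemma cvw_eq_sum (a n : ℕ) :
    cvw a n = ∑ i ∈ Finset.range (a+1), C (cvco a i) * cv (n + i) := by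
  induction a generalizing n with
  | zero => simp [cvw, show cvco 0 0 = 1 from rfl]
  | succ b ih =>
    have e : cvw (b+1) n = cvw b (n+1) - ((4*b+5 : ℕ) : Polynomial ℝ) * cvw b n := rfl
    have hsz : cvco (b+1) 0 = -(4*(b:ℝ)+5) * cvco b 0 := rfl
    have hss : ∀ i : ℕ, cvco (b+1) (i+1) = cvco b i - (4*(b:ℝ)+5) * cvco b (i+1) :=
      fun _ => rfl
    rw [e, ih (n+1), ih n]
    rw [Finset.sum_range_succ' (fun i => C (cvco (b+1) i) * cv (n + i)) (b+1)]
    simp only [hss, hsz, map_sub, map_mul, map_neg, map_add]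
    rw [Finset.mul_sum]
    simp only [sub_mul, Finset.sum_sub_distrib]
    rw [Finset.sum_range_succ'
      (fun i => ((4*b+5 : ℕ) : Polynomial ℝ) * (C (cvco b i) * cv (n + i))) b]
    rw [Finset.sum_range_succ
      (fun x => (C 4 * C (b:ℝ) + C 5) * C (cvco b (x + 1)) * cv (n + (x + 1))) b]
    rw [cvco_gt b (b+1) (by omega)]
    have h1 : ∀ x, n + 1 + x = n + (x + 1) := fun x => by omega
    simp only [h1, map_natCast, map_ofNat, map_zero]
    push_cast
    simp only [mul_assoc, zero_mul, mul_zero, add_zero]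
    ring

theorem stmt_10 (r : ℕ) (hr : 2 ≤ r) (j : ℕ) (hj : j < r * (r-1) / 2) :
    (Matrix.det (Matrix.of fun a b : Fin r => cv ((a:ℕ) + (b:ℕ)))).coeff j = 0 := by
  set M : Matrix (Fin r) (Fin r) (Polynomial ℝ) :=
    Matrix.of fun a b : Fin r => cv ((a:ℕ) + (b:ℕ)) with hM
  set T : Matrix (Fin r) (Fin r) (Polynomial ℝ) :=
    Matrix.of fun a i : Fin r => C (cvco a i) with hT
  -- T is lower triangular with 1s on diagonal
  have hdetT : T.det = 1 := by
    rw [Matrix.det_of_lowerTriangular T (fun i j hij => by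
      simp only [hT, Matrix.of_apply]
      rw [cvco_gt (i:ℕ) (j:ℕ) (by exact_mod_cast hij), map_zero])]
    simp [hT, cvco_self]
  have hN : ∀ a b : Fin r, (T * M) a b = cvw a b := by
    intro a b
    rw [Matrix.mul_apply, cvw_eq_sum]
    rw [Finset.sum_subset (Finset.range_subset_range.mpr (by omega : (a:ℕ)+1 ≤ r))
        (fun i _ hi => by
          rw [cvco_gt (a:ℕ) i (by simpa using hi), map_zero, zero_mul])]
    rw [← Fin.sum_univ_eq_sum_range (fun i => C (cvco (a:ℕ) i) * cv ((b:ℕ) + i)) r]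
    apply Finset.sum_congr rfl
    intro i _
    simp only [hT, hM, Matrix.of_apply]
    rw [add_comm (i:ℕ) (b:ℕ)]
  have hdvd : X ^ (r * (r-1) / 2) ∣ (T * M).det := by
    rw [Matrix.det_apply']
    apply Finset.dvd_sum
    intro σ _
    apply Dvd.dvd.mul_left
    have key : ∀ i : Fin r, X ^ ((σ i : ℕ)) ∣ (T * M) (σ i) i := by
      intro i
      rw [hN]
      exact dvd_cvw _ _
    calc X ^ (r * (r-1) / 2) = ∏ i : Fin r, X ^ ((σ i : ℕ)) := by
          rw [Finset.prod_pow_eq_pow_sum]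
          congr 1
          rw [Equiv.sum_comp σ (fun i : Fin r => (i : ℕ))]
          rw [Fin.sum_univ_eq_sum_range (fun i => i) r]
          have := Finset.sum_range_id_mul_two r
          omega
      _ ∣ ∏ i : Fin r, (T * M) (σ i) i :=
          Finset.prod_dvd_prod_of_dvd _ _ (fun i _ => key i)
  have hdet : M.det = (T * M).det := by
    rw [Matrix.det_mul, hdetT, one_mul]
  rw [hdet]
  obtain ⟨q, hq⟩ := hdvd
  rw [hq, mul_comm, coeff_mul_X_pow', if_neg (by omega)]
end

section
/- Let s_5 and s_9 denote the function s with parameter k = 5 and k = 9 respectively, defined by s(i, j) = 0 if i ≤ 0 or j < 0, s(i, 0) = 1 for i ≥ 1, s(1, j) = k^j for j ≥ 0, and s(i+1, j) = s(i, j) + (k + 4i) · s(i+1, j-1) for i ≥ 1, j ≥ 1. Then for all integers i ≥ 1 and j ≥ 0, the coefficient d(i, i + j) of y^i in p_{i+j}(y) satisfies d(i, i + j) = -3 · (-4)^i · s_5(i + 1, j - 1) + 2 · (-4)^(i-1) · s_9(i, j). -/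
open Polynomial

/-- The defining recurrences for the function `s` with parameter `k`. -/
def SRec (k : ℤ) (s : ℤ × ℤ → ℤ) : Prop :=
  (∀ i j : ℤ, i ≤ 0 → s (i, j) = 0) ∧
  (∀ i j : ℤ, j < 0 → s (i, j) = 0) ∧
  (∀ i : ℤ, 1 ≤ i → s (i, 0) = 1) ∧
  (∀ j : ℕ, s (1, (j : ℤ)) = k ^ j) ∧
  (∀ i j : ℤ, 1 ≤ i → 1 ≤ j → s (i+1, j) = s (i, j) + (k + 4*i) * s (i+1, j-1))

lemma SRec.step {k : ℤ} {s : ℤ × ℤ → ℤ} (h : SRec k s) {i j : ℤ} (hi : 1 ≤ i) (hj : 0 ≤ j) :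
    s (i+1, j) = s (i, j) + (k + 4*i) * s (i+1, j-1) := by
  obtain ⟨h1, h2, h3, h4, h5⟩ := h
  rcases eq_or_lt_of_le hj with hj0 | hj1
  · rw [← hj0, h3 _ hi, h3 _ (by linarith), h2 _ _ (by norm_num)]; ring
  · exact h5 i j hi hj1

lemma cv_coeff_succ (n i : ℕ) :
    (cv (n+1)).coeff (i+1)
      = (4*(i+1)+5) * (cv n).coeff (i+1) - 4 * (cv n).coeff i := by
  have h : cv (n+1) = C 4 * (X * derivative (cv n)) + (C 5 * cv n - C 4 * (X * cv n)) := by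
    rw [cv]; simp only [map_ofNat]; ring
  rw [h]
  simp [coeff_add, coeff_sub, coeff_C_mul, coeff_X_mul, coeff_derivative]
  ring

lemma cv_coeff_zero (n : ℕ) : (cv n).coeff 0 = -3 * 5^n := by
  induction n with
  | zero => simp [cv]
  | succ n ih =>
    have h : cv (n+1) = C 4 * (X * derivative (cv n)) + (C 5 * cv n - C 4 * (X * cv n)) := by
      rw [cv]; simp only [map_ofNat]; ring
    rw [h]
    simp [coeff_add, coeff_sub, coeff_C_mul, ih]
    ring

lemma cv_coeff_eq_zero : ∀ n i : ℕ, n + 1 < i → (cv n).coeff i = 0 := by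
  intro n
  induction n with
  | zero =>
    intro i hi
    match i, hi with
    | (m+2), _ => simp [cv, coeff_X]
  | succ n ih =>
    intro i hi
    match i, hi with
    | (m+1), hi =>
      rw [cv_coeff_succ, ih m (by omega), ih (m+1) (by omega)]
      ring

theorem stmt_15 (s5 s9 : ℤ × ℤ → ℤ) (h5 : SRec 5 s5) (h9 : SRec 9 s9) :
    ∀ i j : ℕ, 1 ≤ i →
      (cv (i + j - 1)).coeff i
        = -3 * (-4 : ℝ)^i * ((s5 ((i : ℤ) + 1, (j : ℤ) - 1) : ℤ) : ℝ)
          + 2 * (-4 : ℝ)^(i-1) * ((s9 ((i : ℤ), (j : ℤ)) : ℤ) : ℝ) := by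
  have key : ∀ n : ℕ, ∀ i j : ℕ, i + j = n → 1 ≤ i →
      (cv (i + j - 1)).coeff i
        = -3 * (-4 : ℝ)^i * ((s5 ((i : ℤ) + 1, (j : ℤ) - 1) : ℤ) : ℝ)
          + 2 * (-4 : ℝ)^(i-1) * ((s9 ((i : ℤ), (j : ℤ)) : ℤ) : ℝ) := by
    intro n
    induction n using Nat.strong_induction_on with
    | _ n IH =>
    intro i j hn hi
    match j, i, hi with
    | 0, 1, _ =>
      have e0 : s5 (2, -1) = 0 := h5.2.1 2 (-1) (by norm_num)
      have e1 : s9 (1, 0) = 1 := h9.2.2.1 1 le_rfl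
      have ecv : (cv 0).coeff 1 = 2 := by
        have : cv 0 = C 2 * X - C 3 := by rw [cv]; simp [map_ofNat]
        rw [this]; simp
      show (cv 0).coeff 1 = _
      push_cast
      norm_num [e0, e1, ecv]
    | 0, (m+2), _ =>
      have I1 := IH (m+1) (by omega) (m+1) 0 rfl (by omega)
      push_cast at I1
      norm_num at I1
      have z1 : s5 ((m:ℤ)+1+1, -1) = 0 := h5.2.1 _ _ (by norm_num)
      have z2 : s9 ((m:ℤ)+1, 0) = 1 := h9.2.2.1 _ (by omega)
      rw [z1, z2] at I1
      have hz : (cv m).coeff (m+2) = 0 := cv_coeff_eq_zero m (m+2) (by omega)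
      have z3 : s5 ((m:ℤ)+2+1, -1) = 0 := h5.2.1 _ _ (by norm_num)
      have z4 : s9 ((m:ℤ)+2, 0) = 1 := h9.2.2.1 _ (by omega)
      show (cv (m+1)).coeff (m+2) = _
      rw [cv_coeff_succ m (m+1), hz, I1]
      push_cast
      norm_num [z3, z4]
      ring
    | (t+1), 1, _ =>
      have I1 := IH (1+t) (by omega) 1 t rfl (by omega)
      rw [show 1+t-1 = t from by omega] at I1
      rw [show ((1:ℕ):ℤ)+1 = 2 from by norm_num] at I1 ⊢
      rw [show ((1:ℕ):ℤ) = 1 from by norm_num] at I1 ⊢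
      rw [show ((t+1:ℕ):ℤ)-1 = (t:ℤ) from by push_cast; ring]
      rw [show ((t+1:ℕ):ℤ) = (t:ℤ)+1 from by push_cast; ring]
      have e1 : s9 (1, (t:ℤ)) = 9^t := h9.2.2.2.1 t
      have e2 : s9 (1, (t:ℤ)+1) = 9^(t+1) := by
        have := h9.2.2.2.1 (t+1); push_cast at this; exact this
      have e3 : s5 (1, (t:ℤ)) = 5^t := h5.2.2.2.1 t
      have E4 : s5 (2, (t:ℤ)) = s5 (1, (t:ℤ)) + (5+4*1) * s5 (2, (t:ℤ)-1) := by
        have := h5.step (i := 1) (j := (t:ℤ)) le_rfl (by omega)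
        rw [show (1:ℤ)+1 = 2 from by norm_num] at this
        exact this
      rw [e3] at E4
      have E4' := congrArg (fun z : ℤ => (z:ℝ)) E4
      have e1' := congrArg (fun z : ℤ => (z:ℝ)) e1
      have e2' := congrArg (fun z : ℤ => (z:ℝ)) e2
      push_cast at E4' e1' e2'
      rw [show 1+(t+1)-1 = t+1 from by omega, cv_coeff_succ t 0, cv_coeff_zero t, I1, e1', e2']
      linear_combination (-12:ℝ) * E4'
    | (t+1), (m+2), _ =>
      have I1 := IH (m+2+t) (by omega) (m+2) t rfl (by omega)
      rw [show m+2+t-1 = m+t+1 from by omega] at I1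
      rw [show ((m+2:ℕ):ℤ)+1 = (m:ℤ)+3 from by push_cast; ring] at I1
      rw [show ((m+2:ℕ):ℤ) = (m:ℤ)+2 from by push_cast; ring] at I1
      rw [show m+2-1 = m+1 from by omega] at I1
      have I2 := IH (m+1+(t+1)) (by omega) (m+1) (t+1) rfl (by omega)
      rw [show m+1+(t+1)-1 = m+t+1 from by omega] at I2
      rw [show ((m+1:ℕ):ℤ)+1 = (m:ℤ)+2 from by push_cast; ring] at I2
      rw [show ((t+1:ℕ):ℤ)-1 = (t:ℤ) from by push_cast; ring] at I2
      rw [show ((m+1:ℕ):ℤ) = (m:ℤ)+1 from by push_cast; ring] at I2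
      rw [show ((t+1:ℕ):ℤ) = (t:ℤ)+1 from by push_cast; ring] at I2
      rw [show m+1-1 = m from by omega] at I2
      have E5 : s5 ((m:ℤ)+3, (t:ℤ)) = s5 ((m:ℤ)+2, (t:ℤ)) + (5 + 4*((m:ℤ)+2)) * s5 ((m:ℤ)+3, (t:ℤ)-1) := by
        have := h5.step (i := (m:ℤ)+2) (j := (t:ℤ)) (by omega) (by omega)
        rw [show (m:ℤ)+2+1 = (m:ℤ)+3 from by ring] at this
        exact this
      have E9 : s9 ((m:ℤ)+2, (t:ℤ)+1) = s9 ((m:ℤ)+1, (t:ℤ)+1) + (9 + 4*((m:ℤ)+1)) * s9 ((m:ℤ)+2, (t:ℤ)) := by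
        have := h9.step (i := (m:ℤ)+1) (j := (t:ℤ)+1) (by omega) (by omega)
        rw [show (m:ℤ)+1+1 = (m:ℤ)+2 from by ring, show (t:ℤ)+1-1 = (t:ℤ) from by ring] at this
        exact this
      have E5' := congrArg (fun z : ℤ => (z:ℝ)) E5
      have E9' := congrArg (fun z : ℤ => (z:ℝ)) E9
      push_cast at E5' E9'
      rw [show m+2+(t+1)-1 = (m+t+1)+1 from by omega]
      rw [show ((m+2:ℕ):ℤ)+1 = (m:ℤ)+3 from by push_cast; ring]
      rw [show ((t+1:ℕ):ℤ)-1 = (t:ℤ) from by push_cast; ring]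
      rw [show ((m+2:ℕ):ℤ) = (m:ℤ)+2 from by push_cast; ring]
      rw [show ((t+1:ℕ):ℤ) = (t:ℤ)+1 from by push_cast; ring]
      rw [show m+2-1 = m+1 from by omega]
      rw [cv_coeff_succ (m+t+1) (m+1), I1, I2]
      push_cast
      linear_combination (48:ℝ)*(-4:ℝ)^m * E5' + (8:ℝ)*(-4:ℝ)^m * E9'
  intro i j hi
  exact key (i+j) i j rfl hi
end

section
/- Fix an integer r ≥ 2. For integers n > r define Δ(n, r) = det [((2n)! / (2(n + j - i))!)]_{i,j=1,…,r}, g(i, n) = (2n + 2i)(2n + 2i - 1), and the normalization Δ̄(n, r) = (2n)^(-r(r-1)) · (∏_{i=1}^{r-1} g(i, n)^(r-i)) · Δ(n, r). Then there exists a polynomial P with rational coefficients of degree at most r(r-1), whose coefficient of X^i vanishes for every 0 ≤ i ≤ r(r-1)/2 - 1, such that Δ̄(n, r) = P(1/(2n)) for every integer n > r. -/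
open Polynomial Finset fwdDiff

namespace Stmt16Aux

/-- The entry polynomial: row `i`, column `j` (0-based), a product of `2*i`
consecutive linear factors. -/
noncomputable def Qp (i j : ℕ) : ℚ[X] :=
  ∏ k ∈ Finset.range (2 * i), (X + C (2 * (j : ℚ) - 2 * i + 1 + k))

lemma natDegree_Qp_le (i j : ℕ) : (Qp i j).natDegree ≤ 2 * i := by
  refine le_trans (natDegree_prod_le _ _) ?_
  rw [Finset.sum_congr rfl fun k _ => natDegree_X_add_C (R := ℚ) _]
  simp

/-- ℕ helper: `s! * (s+1)(s+2)⋯(s+m) = (s+m)!`. -/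
lemma fact_prod (s m : ℕ) : s.factorial * ∏ k ∈ range m, (s + 1 + k) = (s+m).factorial := by
  induction m with
  | zero => simp
  | succ m ih =>
      rw [prod_range_succ, ← mul_assoc, ih, show s + (m+1) = (s + m) + 1 by omega, Nat.factorial_succ]
      ring

/-- the coefficient of `x^m` in `Qp i j` is a polynomial of degree `≤ 2i - m` in `j`. -/
lemma exists_G (i m : ℕ) (hm : m ≤ 2 * i) :
    ∃ g : ℚ[X], g.natDegree ≤ 2 * i - m ∧ ∀ j : ℕ, (Qp i j).coeff m = g.eval (j:ℚ) := by
  refine ⟨∑ t ∈ (range (2 * i)).powersetCard (2 * i - m),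
      ∏ k ∈ t, (C 2 * X + C ((k : ℚ) - 2 * i + 1)), ?_, ?_⟩
  · refine natDegree_sum_le_of_forall_le _ _ fun t ht => ?_
    refine le_trans (natDegree_prod_le _ _) ?_
    have hc := (Finset.mem_powersetCard.mp ht).2
    refine le_trans (Finset.sum_le_sum (g := fun _ => 1)
      (fun k _ => natDegree_linear_le)) ?_
    simp [hc]
  · intro j
    rw [Qp, Finset.prod_X_add_C_coeff _ _ (by simpa using hm), eval_finset_sum,
      Finset.card_range]
    refine Finset.sum_congr rfl fun t _ => ?_
    rw [eval_prod]
    exact Finset.prod_congr rfl fun k _ => by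
      simp only [eval_add, eval_mul, eval_C, eval_X]; ring

lemma fwd_iter_zero (j : ℕ) (y : ℚ) : (fwdDiff (1:ℚ))^[j] (fun _ : ℚ => (0:ℚ)) y = 0 := by
  induction j generalizing y with
  | zero => rfl
  | succ j ih =>
      rw [Function.iterate_succ_apply']
      simp only [fwdDiff, ih, sub_zero]

/-- iterated forward differences kill polynomials of low degree. -/
lemma fwd_kill : ∀ (j : ℕ) (g : ℚ[X]), g.natDegree < j →
    ∀ y : ℚ, (fwdDiff (1:ℚ))^[j] (fun z : ℚ => g.eval z) y = 0 := by
  intro j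
  induction j with
  | zero => exact fun g hg => absurd hg (Nat.not_lt_zero _)
  | succ j ih =>
      intro g hg y
      rw [Function.iterate_succ_apply]
      have hstep : (fwdDiff (1:ℚ)) (fun z : ℚ => g.eval z)
          = fun z : ℚ => (g.comp (X + C 1) - g).eval z := by
        funext z
        simp [fwdDiff, eval_comp]
      rw [hstep]
      by_cases h0 : g.natDegree = 0
      · obtain ⟨c, rfl⟩ := Polynomial.natDegree_eq_zero.mp h0
        have hz : (C c : ℚ[X]).comp (X + C 1) - C c = 0 := by simp
        rw [hz]
        simpa using fwd_iter_zero j y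
      · have h1 : 1 ≤ g.natDegree := Nat.one_le_iff_ne_zero.mpr h0
        have hg0 : g ≠ 0 := fun h => by simp [h] at h1
        have hc : (g.comp (X + C 1)).natDegree = g.natDegree := by
          rw [natDegree_comp, natDegree_X_add_C, mul_one]
        have hcomp0 : g.comp (X + C 1) ≠ 0 := by
          intro h
          rw [h, natDegree_zero] at hc
          omega
        have hlc : (g.comp (X + C 1)).leadingCoeff = g.leadingCoeff := by
          rw [leadingCoeff_comp (by rw [natDegree_X_add_C]; exact one_ne_zero),
            (monic_X_add_C (1:ℚ)).leadingCoeff, one_pow, mul_one]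
        have hdrop : (g.comp (X + C 1) - g).natDegree < g.natDegree := by
          by_cases hsub : g.comp (X + C 1) - g = 0
          · rw [hsub, natDegree_zero]; omega
          · have hdeg : (g.comp (X + C 1)).degree = g.degree := by
              rw [degree_eq_natDegree hcomp0, degree_eq_natDegree hg0, hc]
            have hlt := degree_sub_lt hdeg hcomp0 hlc
            rw [hdeg] at hlt
            exact natDegree_lt_natDegree hsub hlt
        exact ih _ (by omega) y

noncomputable def QM (r : ℕ) : Matrix (Fin r) (Fin r) ℚ[X] :=
  Matrix.of fun a b => Qp a b

noncomputable def T (r : ℕ) : Matrix (Fin r) (Fin r) ℚ[X] :=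
  Matrix.of fun k j => C ((-1 : ℚ) ^ ((j:ℕ) + (k:ℕ)) * ((j:ℕ).choose (k:ℕ)))

lemma detT (r : ℕ) : (T r).det = 1 := by
  have ht : (T r).BlockTriangular id := by
    intro i j hij
    have : (j:ℕ) < (i:ℕ) := hij
    simp only [T, Matrix.of_apply]
    rw [Nat.choose_eq_zero_of_lt this]
    simp
  rw [Matrix.det_of_upperTriangular ht]
  refine Finset.prod_eq_one fun i _ => ?_
  simp only [T, Matrix.of_apply, Nat.choose_self, Nat.cast_one, mul_one]
  rw [← two_mul, pow_mul, neg_one_sq, one_pow, map_one]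

lemma coeffN (r : ℕ) (a b : Fin r) (m : ℕ) (h : 2 * (a:ℕ) < m + (b:ℕ)) :
    ((QM r * T r) a b).coeff m = 0 := by
  rw [Matrix.mul_apply, finset_sum_coeff]
  by_cases hm : 2 * (a:ℕ) < m
  · refine Finset.sum_eq_zero fun k _ => ?_
    simp only [QM, T, Matrix.of_apply, coeff_mul_C]
    rw [coeff_eq_zero_of_natDegree_lt (lt_of_le_of_lt (natDegree_Qp_le a k) hm), zero_mul]
  · push_neg at hm
    obtain ⟨g, hgdeg, hgev⟩ := exists_G a m hm
    have hsum : ∑ k : Fin r, ((QM r) a k * (T r) k b).coeff m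
        = ∑ k ∈ range r, g.eval (k:ℚ) * ((-1:ℚ)^((b:ℕ)+k) * ((b:ℕ).choose k)) := by
      rw [← Fin.sum_univ_eq_sum_range
        (fun k => g.eval (k:ℚ) * ((-1:ℚ)^((b:ℕ)+k) * ((b:ℕ).choose k))) r]
      refine Finset.sum_congr rfl fun k _ => ?_
      simp only [QM, T, Matrix.of_apply, coeff_mul_C]
      rw [hgev k]
    rw [hsum]
    have hb1 : (b:ℕ) + 1 ≤ r := b.isLt
    have hres : ∑ k ∈ range r, g.eval (k:ℚ) * ((-1:ℚ)^((b:ℕ)+k) * ((b:ℕ).choose k))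
        = ∑ k ∈ range ((b:ℕ)+1), g.eval (k:ℚ) * ((-1:ℚ)^((b:ℕ)+k) * ((b:ℕ).choose k)) := by
      refine (Finset.sum_subset (Finset.range_subset_range.mpr hb1) fun x _ hx => ?_).symm
      have : (b:ℕ) < x := by simpa [Nat.lt_succ_iff] using hx
      rw [Nat.choose_eq_zero_of_lt this]
      simp
    rw [hres]
    have hkill := fwd_kill ((b:ℕ)) g (by omega) 0
    rw [fwdDiff_iter_eq_sum_shift] at hkill
    refine Eq.trans (Finset.sum_congr rfl fun k hk => ?_) hkill
    have hkb : k ≤ (b:ℕ) := by simpa [Nat.lt_succ_iff] using hk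
    rw [zsmul_eq_mul]
    have hsign : ((-1:ℚ))^((b:ℕ)+k) = ((-1:ℚ))^((b:ℕ)-k) := by
      rw [show ((b:ℕ)+k) = ((b:ℕ)-k) + 2*k by omega, pow_add, pow_mul, neg_one_sq,
        one_pow, mul_one]
    have harg : (0 : ℚ) + k • (1:ℚ) = (k:ℚ) := by simp
    rw [harg, hsign]
    push_cast
    ring

lemma coeff_detQM (r s : ℕ) (hs : r * (r-1) / 2 < s) : ((QM r).det).coeff s = 0 := by
  have hd : (QM r).det = (QM r * T r).det := by rw [Matrix.det_mul, detT, mul_one]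
  rw [hd, Matrix.det_apply, finset_sum_coeff]
  refine Finset.sum_eq_zero fun σ _ => ?_
  rw [Polynomial.coeff_smul]
  by_cases hA : ∃ i : Fin r, 2 * ((σ i : Fin r) : ℕ) < (i:ℕ)
  · obtain ⟨i, hi⟩ := hA
    have hzero : (QM r * T r) (σ i) i = 0 :=
      Polynomial.ext fun m => by rw [coeffN r _ _ m (by omega), coeff_zero]
    rw [show (∏ i : Fin r, (QM r * T r) (σ i) i) = 0 from
      Finset.prod_eq_zero (Finset.mem_univ i) hzero, coeff_zero, smul_zero]
  · push_neg at hA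
    have hdeg : (∏ i, (QM r * T r) (σ i) i).natDegree ≤ r * (r-1) / 2 := by
      refine le_trans (natDegree_prod_le _ _) ?_
      have hle : ∀ i : Fin r, ((QM r * T r) (σ i) i).natDegree ≤ 2 * ((σ i : Fin r):ℕ) - (i:ℕ) :=
        fun i => natDegree_le_iff_coeff_eq_zero.mpr fun m hm =>
          coeffN r _ _ m (by have := hA i; omega)
      refine le_trans (Finset.sum_le_sum fun i _ => hle i) (le_of_eq ?_)
      have h2 : ∑ i : Fin r, ((σ i : Fin r) : ℕ) = ∑ i : Fin r, (i:ℕ) :=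
        Equiv.sum_comp σ (fun i => (i:ℕ))
      have h3 : ∑ i : Fin r, (i:ℕ) = r * (r-1) / 2 := by
        rw [Fin.sum_univ_eq_sum_range (fun i => i) r, Finset.sum_range_id]
      have h4 : ∑ i : Fin r, (2 * ((σ i : Fin r):ℕ) - (i:ℕ))
          = ∑ i : Fin r, 2 * ((σ i : Fin r):ℕ) - ∑ i : Fin r, (i:ℕ) :=
        Finset.sum_tsub_distrib Finset.univ fun i _ => hA i
      rw [h4, ← Finset.mul_sum, h2, h3]
      omega
    rw [coeff_eq_zero_of_natDegree_lt (lt_of_le_of_lt hdeg hs), smul_zero]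

lemma eval_Qp (n a b : ℕ) (ha : a ≤ n) :
    (Qp a b).eval (2 * n : ℚ)
      = (∏ k ∈ Icc 1 (2*b), ((2*n + k : ℕ) : ℚ))
        * (((2*n).factorial : ℚ) / ((2*(n + b - a)).factorial : ℚ)) := by
  set u := n + b - a with hu_def
  have hu : u + a = n + b := by omega
  have hL : (Qp a b).eval (2 * n : ℚ) = ∏ k ∈ range (2*a), ((2*u + 1 + k : ℕ) : ℚ) := by
    rw [Qp, eval_prod]
    refine Finset.prod_congr rfl fun k _ => ?_
    simp only [eval_add, eval_X, eval_C]
    have hcast : ((u:ℚ) + a) = (n:ℚ) + b := by exact_mod_cast congrArg (Nat.cast : ℕ → ℚ) hu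
    push_cast
    linarith
  rw [hL]
  have h1 : ((2*u).factorial : ℚ) * ∏ k ∈ range (2*a), ((2*u + 1 + k : ℕ) : ℚ)
      = ((2*u + 2*a).factorial : ℚ) := by
    exact_mod_cast congrArg (Nat.cast : ℕ → ℚ) (fact_prod (2*u) (2*a))
  have hicc : ∏ k ∈ Icc 1 (2*b), ((2*n + k : ℕ) : ℚ)
      = ∏ k ∈ range (2*b), ((2*n + 1 + k : ℕ) : ℚ) := by
    rw [show Icc 1 (2*b) = Ico 1 (2*b+1) by rw [Finset.Ico_add_one_right_eq_Icc],
      Finset.prod_Ico_eq_prod_range]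
    refine Finset.prod_congr (by simp) fun k _ => ?_
    congr 1
    omega
  have h2 : ((2*n).factorial : ℚ) * ∏ k ∈ Icc 1 (2*b), ((2*n + k : ℕ) : ℚ)
      = ((2*n + 2*b).factorial : ℚ) := by
    rw [hicc]
    exact_mod_cast congrArg (Nat.cast : ℕ → ℚ) (fact_prod (2*n) (2*b))
  have hne1 : ((2*u).factorial : ℚ) ≠ 0 := Nat.cast_ne_zero.mpr (Nat.factorial_ne_zero _)
  have hne2 : ((2*n).factorial : ℚ) ≠ 0 := Nat.cast_ne_zero.mpr (Nat.factorial_ne_zero _)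
  have heq : ((2*u + 2*a).factorial : ℚ) = ((2*n + 2*b).factorial : ℚ) := by
    have : 2*u + 2*a = 2*n + 2*b := by omega
    rw [this]
  have hfold : (∏ k ∈ Icc 1 (2*b), ((2*n + k : ℕ) : ℚ))
      * (((2*n).factorial : ℚ) / ((2*u).factorial : ℚ))
      = ((2*n + 2*b).factorial : ℚ) / ((2*u).factorial : ℚ) := by
    rw [← mul_div_assoc, mul_comm, h2]
  rw [hfold, ← heq, ← h1, mul_comm (((2*u).factorial : ℚ)), mul_div_assoc,
    div_self hne1, mul_one]

lemma prod_pair (f : ℕ → ℚ) (R : ℕ) :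
    ∏ d ∈ Icc 1 R, (f (2*d) * f (2*d - 1)) = ∏ k ∈ Icc 1 (2*R), f k := by
  induction R with
  | zero => simp
  | succ R ih =>
      rw [Finset.prod_Icc_succ_top (by omega), ih,
        show 2*(R+1) = (2*R+1)+1 by ring, Finset.prod_Icc_succ_top (by omega),
        Finset.prod_Icc_succ_top (by omega)]
      rw [show 2*R+1+1-1 = 2*R+1 by omega]
      ring

lemma prodv (f : ℕ → ℚ) (R : ℕ) :
    ∏ b ∈ range R, ∏ k ∈ Icc 1 (2*b), f k
      = ∏ d ∈ Icc 1 (R-1), (f (2*d) * f (2*d - 1))^(R - d) := by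
  induction R with
  | zero => simp
  | succ R ih =>
      rw [prod_range_succ, ih]
      rcases Nat.eq_zero_or_pos R with rfl | hR
      · simp
      obtain ⟨R', rfl⟩ : ∃ R', R = R' + 1 := ⟨R - 1, by omega⟩
      have hstep : ∏ d ∈ Icc 1 (R'+1), (f (2*d) * f (2*d-1))^(R'+1+1-d)
          = (∏ d ∈ Icc 1 (R'+1), (f (2*d) * f (2*d-1))^(R'+1-d))
            * ∏ d ∈ Icc 1 (R'+1), (f (2*d) * f (2*d-1)) := by
        rw [← Finset.prod_mul_distrib]
        refine Finset.prod_congr rfl fun d hd => ?_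
        have h2 := (Finset.mem_Icc.mp hd).2
        rw [show R'+1+1 - d = (R'+1 - d) + 1 by omega, pow_succ]
      rw [show R'+1+1-1 = R'+1 by omega, hstep, prod_pair,
        Finset.prod_Icc_succ_top (show 1 ≤ R'+1 by omega), Nat.add_sub_cancel,
        Nat.sub_self, pow_zero, mul_one]

end Stmt16Aux

theorem stmt_16 (r : ℕ) (hr : 2 ≤ r) :
    ∃ P : Polynomial ℚ, P.natDegree ≤ r * (r-1) ∧
      (∀ i : ℕ, i < r * (r-1) / 2 → P.coeff i = 0) ∧
      ∀ n : ℕ, r < n →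
        (((2*n : ℚ))^(r * (r-1)))⁻¹
            * (∏ i ∈ Finset.Icc 1 (r-1),
                (((2*n + 2*i) * (2*n + 2*i - 1) : ℕ) : ℚ)^(r - i))
            * Matrix.det (Matrix.of fun a b : Fin r =>
                (((2*n).factorial : ℚ) / ((2*(n + (b:ℕ) - (a:ℕ))).factorial : ℚ)))
          = P.eval (1 / (2*n : ℚ)) := by
  classical
  have hEven : 2 * ((r * (r-1)) / 2) = r * (r-1) := by
    have he : Even (r * (r-1)) := by
      rcases Nat.even_or_odd r with h | h
      · exact h.mul_right _
      · refine Even.mul_left ?_ _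
        rcases h with ⟨k, hk⟩
        exact ⟨k, by omega⟩
    obtain ⟨k, hk⟩ := he
    omega
  have hdeg : (Stmt16Aux.QM r).det.natDegree ≤ r * (r-1) / 2 :=
    Polynomial.natDegree_le_iff_coeff_eq_zero.mpr fun m hm => Stmt16Aux.coeff_detQM r m hm
  refine ⟨(Stmt16Aux.QM r).det.reflect (r * (r-1)), ?_, ?_, ?_⟩
  · refine Polynomial.natDegree_le_iff_coeff_eq_zero.mpr fun m hm => ?_
    rw [Polynomial.coeff_reflect, Polynomial.revAt_eq_self_of_lt hm]
    exact Polynomial.coeff_eq_zero_of_natDegree_lt (lt_of_le_of_lt hdeg (by omega))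
  · intro i hi
    rw [Polynomial.coeff_reflect, Polynomial.revAt_le (by omega : i ≤ r * (r-1))]
    exact Stmt16Aux.coeff_detQM r _ (by omega)
  · intro n hn
    have hx : (2 * n : ℚ) ≠ 0 := by
      have : (0:ℚ) < (n:ℚ) := by exact_mod_cast (by omega : 0 < n)
      positivity
    haveI : Invertible (2 * n : ℚ) := invertibleOfNonzero hx
    have hev : (Polynomial.reflect (r * (r-1)) (Stmt16Aux.QM r).det).eval (⅟(2*n : ℚ))
          * (2*n : ℚ)^(r * (r-1)) = (Stmt16Aux.QM r).det.eval (2*n : ℚ) :=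
      Polynomial.eval₂_reflect_mul_pow (RingHom.id ℚ) (2*n : ℚ) (r * (r-1))
        (Stmt16Aux.QM r).det (le_trans hdeg (by omega))
    have h1 : (Stmt16Aux.QM r).det.eval (2*n : ℚ)
        = ((Stmt16Aux.QM r).map (Polynomial.evalRingHom (2*n : ℚ))).det := by
      have := RingHom.map_det (Polynomial.evalRingHom (2*n : ℚ)) (Stmt16Aux.QM r)
      simpa using this
    have h2 : (Stmt16Aux.QM r).map (Polynomial.evalRingHom (2*n : ℚ))
        = Matrix.of (fun a b : Fin r =>
            (fun j : Fin r => ∏ k ∈ Finset.Icc 1 (2*(j:ℕ)), ((2*n + k : ℕ) : ℚ)) b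
            * (Matrix.of fun a b : Fin r =>
                (((2*n).factorial : ℚ) / ((2*(n + (b:ℕ) - (a:ℕ))).factorial : ℚ))) a b) := by
      ext a b
      simp only [Matrix.map_apply, Matrix.of_apply, Polynomial.coe_evalRingHom, Stmt16Aux.QM]
      exact Stmt16Aux.eval_Qp n a b (by omega : (a:ℕ) ≤ n)
    rw [h2, Matrix.det_mul_row] at h1
    have hnorm : (∏ j : Fin r, ∏ k ∈ Finset.Icc 1 (2*(j:ℕ)), ((2*n + k : ℕ) : ℚ))
        = ∏ i ∈ Finset.Icc 1 (r-1), (((2*n + 2*i) * (2*n + 2*i - 1) : ℕ) : ℚ)^(r - i) := by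
      rw [Fin.prod_univ_eq_prod_range (fun b => ∏ k ∈ Finset.Icc 1 (2*b), ((2*n + k : ℕ) : ℚ)) r,
        Stmt16Aux.prodv (fun k => ((2*n + k : ℕ) : ℚ)) r]
      refine Finset.prod_congr rfl fun d hd => ?_
      have hd1 : 1 ≤ d := (Finset.mem_Icc.mp hd).1
      congr 1
      rw [show 2*n + (2*d - 1) = 2*n + 2*d - 1 by omega, ← Nat.cast_mul]
    have hPev : (Polynomial.reflect (r * (r-1)) (Stmt16Aux.QM r).det).eval ((2*n : ℚ))⁻¹
        = ((Stmt16Aux.QM r).det.eval (2*n : ℚ)) / (2*n : ℚ)^(r * (r-1)) := by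
      rw [eq_div_iff (pow_ne_zero _ hx), ← invOf_eq_inv]
      exact hev
    rw [one_div, hPev, h1, hnorm]
    field_simp
end

section
/- For every integer r ≥ 1, the coefficient of y^(r(r-1)/2) in W_r(y) = det [(p_{i+j-1}(y))_{i,j=1,…,r}] equals (∏_{j=0}^{r-1} ((-1)^(j+1) (2j + 3) / j!)) · (det [((5 + 4i)^j)]_{i,j=0,…,r-1})^2. -/
open Polynomial

noncomputable def Acv (j : ℕ) : ℝ := (-1)^(j+1) * (2*j + 3) / j.factorial

noncomputable def Bcv (m j : ℕ) : ℝ := if j ≤ m then Acv j / (m - j).factorial else 0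

noncomputable def xcv (j : ℕ) : ℝ := 5 + 4*j

lemma alt_choose_real (m : ℕ) (hm : 1 ≤ m) :
    ∑ j ∈ Finset.range (m+1), ((-1:ℝ))^j * m.choose j = 0 := by
  have h := @Int.alternating_sum_range_choose m
  rw [if_neg (by omega)] at h
  exact_mod_cast congrArg (Int.cast : ℤ → ℝ) h

lemma alt_sum_zero (m : ℕ) (hm : 2 ≤ m) :
    ∑ j ∈ Finset.range (m+1), ((-1:ℝ))^(j+1) * (2*j + 3) * m.choose j = 0 := by
  have h1 := alt_choose_real m (by omega)
  have h2 : ∑ j ∈ Finset.range (m+1), ((-1:ℝ))^j * j * m.choose j = 0 := by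
    obtain ⟨m', rfl⟩ : ∃ m', m = m' + 1 := ⟨m - 1, by omega⟩
    rw [Finset.sum_range_succ']
    simp only [Nat.cast_zero, mul_zero, zero_mul, pow_zero, add_zero]
    have key : ∀ j : ℕ, ((-1:ℝ))^(j+1) * ((j:ℝ)+1) * ((m'+1).choose (j+1))
        = -(((m':ℝ)+1) * (((-1:ℝ))^j * (m'.choose j))) := by
      intro j
      have h := Nat.add_one_mul_choose_eq m' j
      have hc : ((m':ℝ)+1) * (m'.choose j) = ((m'+1).choose (j+1) : ℝ) * ((j:ℝ)+1) := by
        exact_mod_cast congrArg (Nat.cast : ℕ → ℝ) h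
      rw [pow_succ]
      linear_combination ((-1:ℝ))^j * hc
    have : ∀ j ∈ Finset.range (m'+1), ((-1:ℝ))^(j+1) * (↑(j+1)) * ((m'+1).choose (j+1))
        = -(((m':ℝ)+1) * (((-1:ℝ))^j * (m'.choose j))) := by
      intro j _; push_cast; exact key j
    rw [Finset.sum_congr rfl this, Finset.sum_neg_distrib, ← Finset.mul_sum,
      alt_choose_real m' (by omega)]
    ring
  have : ∑ j ∈ Finset.range (m+1), ((-1:ℝ))^(j+1) * (2*j + 3) * m.choose j
      = ∑ j ∈ Finset.range (m+1), (-2*(((-1:ℝ))^j * j * m.choose j) - 3*(((-1:ℝ))^j * m.choose j)) := by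
    apply Finset.sum_congr rfl; intro j _; rw [pow_succ]; ring
  rw [this, Finset.sum_sub_distrib, ← Finset.mul_sum, ← Finset.mul_sum, h1, h2]; ring

lemma bsum_zero (m : ℕ) (hm : 2 ≤ m) :
    ∑ j ∈ Finset.range (m+1), Bcv m j = 0 := by
  have key := alt_sum_zero m hm
  have : ∑ j ∈ Finset.range (m+1), Bcv m j
      = (∑ j ∈ Finset.range (m+1), ((-1:ℝ))^(j+1) * (2*j + 3) * m.choose j) / m.factorial := by
    rw [Finset.sum_div]
    apply Finset.sum_congr rfl
    intro j hj
    rw [Finset.mem_range] at hj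
    have hjm : j ≤ m := by omega
    rw [Bcv, if_pos hjm, Acv]
    have hch : (m.choose j : ℝ) = m.factorial / (j.factorial * (m-j).factorial) := by
      rw [Nat.choose_eq_factorial_div_factorial hjm]
      rw [Nat.cast_div (Nat.factorial_mul_factorial_dvd_factorial hjm) (by positivity)]
      push_cast; ring
    rw [hch]
    have h1 : (j.factorial : ℝ) ≠ 0 := Nat.cast_ne_zero.2 j.factorial_ne_zero
    have h2 : ((m-j).factorial : ℝ) ≠ 0 := Nat.cast_ne_zero.2 (m-j).factorial_ne_zero
    have h3 : (m.factorial : ℝ) ≠ 0 := Nat.cast_ne_zero.2 m.factorial_ne_zero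
    field_simp
  rw [this, key, zero_div]

lemma coeff_cv (n m : ℕ) :
    (cv n).coeff m = ∑ j ∈ Finset.range (m+1), Bcv m j * xcv j ^ n := by
  induction n generalizing m with
  | zero =>
    show (2 * X - 3 : Polynomial ℝ).coeff m = _
    simp only [pow_zero, mul_one]
    match m, (by omega : m = 0 ∨ m = 1 ∨ 2 ≤ m) with
    | 0, _ =>
      rw [coeff_sub, coeff_ofNat_mul, coeff_X, if_neg (by omega), coeff_ofNat_zero,
        Finset.sum_range_one, Bcv, if_pos le_rfl, Acv]
      norm_num [Nat.factorial]
    | 1, _ =>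
      rw [coeff_sub, coeff_ofNat_mul, coeff_X, if_pos rfl, coeff_ofNat_succ,
        Finset.sum_range_succ, Finset.sum_range_one, Bcv, Bcv, if_pos (by omega),
        if_pos le_rfl, Acv, Acv]
      norm_num [Nat.factorial]
    | (m''+2), Or.inr (Or.inr hm) =>
      rw [bsum_zero _ hm, coeff_sub, coeff_ofNat_mul, coeff_X, if_neg (by omega),
        coeff_ofNat_succ]
      ring
  | succ n ih =>
    have hB : ∀ (m' : ℕ), ∀ j ≤ m'+1,
        (4*((m':ℝ)+1) + 5) * Bcv (m'+1) j - 4 * Bcv m' j = Bcv (m'+1) j * xcv j := by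
      intro m' j hj
      rcases Nat.lt_or_ge j (m'+1) with hlt | hge
      · have hjm : j ≤ m' := by omega
        rw [Bcv, if_pos (by omega), Bcv, if_pos hjm, xcv]
        have hfac : ((m'+1-j).factorial : ℝ) = ((m'+1-j):ℕ) * ((m'-j).factorial : ℝ) := by
          have : m'+1-j = (m'-j)+1 := by omega
          rw [this, Nat.factorial_succ]; push_cast; ring
        have h1 : ((m'-j).factorial : ℝ) ≠ 0 := Nat.cast_ne_zero.2 (m'-j).factorial_ne_zero
        have h2 : ((m'+1-j).factorial : ℝ) ≠ 0 := Nat.cast_ne_zero.2 (m'+1-j).factorial_ne_zero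
        have hcast : ((m'+1-j : ℕ) : ℝ) = (m' : ℝ) + 1 - j := by
          have : ((m'+1-j : ℕ) : ℝ) = ((m'+1 : ℕ) : ℝ) - (j:ℕ) := by
            rw [Nat.cast_sub (by omega)]
          rw [this]; push_cast; ring
        field_simp
        rw [hfac, hcast]
        ring
      · have hj' : j = m'+1 := by omega
        subst hj'
        rw [Bcv, if_pos le_rfl, Bcv, if_neg (by omega), xcv]
        simp only [Nat.sub_self, Nat.factorial_zero, Nat.cast_one, div_one]
        push_cast; ring
    have hstep : ∀ (p : ℝ[X]) (k : ℕ), (4*X*derivative p + (5-4*X)*p).coeff k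
        = (4*(k:ℝ)+5) * p.coeff k - 4 * (if k = 0 then 0 else p.coeff (k-1)) := by
      intro p k
      have hring : (4*X*derivative p + (5-4*X)*p) = 4*(X*derivative p) + (5*p - 4*(X*p)) := by
        ring
      rw [hring, coeff_add, coeff_sub, coeff_ofNat_mul, coeff_ofNat_mul, coeff_ofNat_mul]
      cases k with
      | zero =>
        rw [mul_coeff_zero, mul_coeff_zero, coeff_X_zero, if_pos rfl]
        push_cast; ring
      | succ k' =>
        rw [coeff_X_mul, coeff_X_mul, coeff_derivative, if_neg (by omega)]
        simp only [Nat.add_sub_cancel]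
        push_cast; ring
    show (4 * X * (derivative (cv n)) + (5 - 4 * X) * (cv n)).coeff m = _
    rw [hstep]
    match m with
    | 0 =>
      rw [if_pos rfl, ih 0, Finset.sum_range_one, Finset.sum_range_one]
      rw [show xcv 0 = 5 by rw [xcv]; norm_num]
      push_cast; ring
    | (m'+1) =>
      rw [if_neg (by omega), Nat.add_sub_cancel, ih (m'+1), ih m']
      have hext : ∑ j ∈ Finset.range (m'+1), Bcv m' j * xcv j ^ n
          = ∑ j ∈ Finset.range (m'+2), Bcv m' j * xcv j ^ n := by
        rw [Finset.sum_range_succ (n := m'+1), Bcv, if_neg (by omega)]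
        ring
      rw [hext, Finset.mul_sum, Finset.mul_sum, ← Finset.sum_sub_distrib]
      apply Finset.sum_congr rfl
      intro j hj
      rw [Finset.mem_range] at hj
      have h := hB m' j (by omega)
      have : (4*((m':ℝ)+1) + 5) * (Bcv (m'+1) j * xcv j ^ n) - 4 * (Bcv m' j * xcv j ^ n)
          = ((4*((m':ℝ)+1) + 5) * Bcv (m'+1) j - 4 * Bcv m' j) * xcv j ^ n := by ring
      push_cast
      rw [this, h, pow_succ]
      ring


-- order lemmas, standalone
lemma coeff_prod_zero_of_lt {ι : Type*} [DecidableEq ι] (s : Finset ι) (p : ι → Polynomial ℝ) (d : ι → ℕ)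
    (h : ∀ i ∈ s, ∀ m, m < d i → (p i).coeff m = 0) :
    ∀ m, m < ∑ i ∈ s, d i → (∏ i ∈ s, p i).coeff m = 0 := by
  induction s using Finset.induction_on with
  | empty => intro m hm; simp at hm
  | insert _ _ hi ih =>
    rename_i a s
    intro m hm
    rw [Finset.prod_insert hi, Polynomial.coeff_mul]
    apply Finset.sum_eq_zero
    intro x hx
    rw [Finset.HasAntidiagonal.mem_antidiagonal] at hx
    rw [Finset.sum_insert hi] at hm
    rcases Nat.lt_or_ge x.1 (d a) with h1 | h1
    · rw [h a (Finset.mem_insert_self a s) x.1 h1, zero_mul]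
    · have : x.2 < ∑ i ∈ s, d i := by omega
      rw [ih (fun i hi' m hm' => h i (Finset.mem_insert_of_mem hi') m hm') x.2 this, mul_zero]

lemma coeff_prod_order {ι : Type*} [DecidableEq ι] (s : Finset ι) (p : ι → Polynomial ℝ) (d : ι → ℕ)
    (h : ∀ i ∈ s, ∀ m, m < d i → (p i).coeff m = 0) :
    (∏ i ∈ s, p i).coeff (∑ i ∈ s, d i) = ∏ i ∈ s, (p i).coeff (d i) := by
  induction s using Finset.induction_on with
  | empty => simp
  | insert _ _ hi ih =>
    rename_i a s
    rw [Finset.prod_insert hi, Finset.sum_insert hi, Finset.prod_insert hi,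
      Polynomial.coeff_mul]
    have hmem : (d a, ∑ i ∈ s, d i) ∈ Finset.HasAntidiagonal.antidiagonal (d a + ∑ i ∈ s, d i) := by
      rw [Finset.HasAntidiagonal.mem_antidiagonal]
    rw [Finset.sum_eq_single_of_mem _ hmem]
    · rw [ih (fun i hi' m hm' => h i (Finset.mem_insert_of_mem hi') m hm')]
    · intro x hx hne
      rw [Finset.HasAntidiagonal.mem_antidiagonal] at hx
      rcases Nat.lt_or_ge x.1 (d a) with h1 | h1
      · rw [h a (Finset.mem_insert_self a s) x.1 h1, zero_mul]
      · have : x.2 < ∑ i ∈ s, d i := by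
          rcases Nat.lt_or_ge x.2 (∑ i ∈ s, d i) with h2 | h2
          · exact h2
          · exfalso; apply hne; have : x.1 = d a := by omega
            have h2' : x.2 = ∑ i ∈ s, d i := by omega
            exact Prod.ext this h2'
        rw [coeff_prod_zero_of_lt s p d
          (fun i hi' m hm' => h i (Finset.mem_insert_of_mem hi') m hm') x.2 this, mul_zero]

-- finset of naturals sum lemma
lemma finset_nat_sum_lemma : ∀ (n : ℕ) (S : Finset ℕ), S.card = n →
    S = Finset.range n ∨ (∑ i ∈ Finset.range n, i) < ∑ s ∈ S, s := by
  intro n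
  induction n with
  | zero => intro S hS; left; rw [Finset.card_eq_zero] at hS; simp [hS]
  | succ n ih =>
    intro S hS
    have hne : S.Nonempty := by
      rw [← Finset.card_pos, hS]; omega
    set m := S.max' hne with hm
    have hmem : m ∈ S := S.max'_mem hne
    have hsub : S ⊆ Finset.range (m+1) := by
      intro x hx
      rw [Finset.mem_range]
      exact Nat.lt_succ_of_le (S.le_max' x hx)
    have hcard : n + 1 ≤ m + 1 := by
      rw [← hS, ← Finset.card_range (m+1)]
      exact Finset.card_le_card hsub
    have hnm : n ≤ m := by omega
    have hSsum : ∑ s ∈ S, s = m + ∑ s ∈ S.erase m, s := by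
      rw [← Finset.add_sum_erase S _ hmem]
    have hcard' : (S.erase m).card = n := by
      rw [Finset.card_erase_of_mem hmem, hS]; omega
    rcases ih (S.erase m) hcard' with he | he
    · rcases Nat.lt_or_ge n m with hlt | hge
      · right
        rw [hSsum, he, Finset.sum_range_succ]
        omega
      · left
        have hmn : m = n := by omega
        rw [← Finset.insert_erase hmem, he, hmn]
        rw [Finset.range_add_one]
    · right
      rw [hSsum, Finset.sum_range_succ]
      omega

-- degree bound
lemma natDegree_cv (n : ℕ) : (cv n).natDegree ≤ n + 1 := by
  induction n with
  | zero =>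
    show (2 * X - 3 : ℝ[X]).natDegree ≤ 1
    compute_degree
  | succ n ih =>
    show (4 * X * (derivative (cv n)) + (5 - 4 * X) * (cv n)).natDegree ≤ n + 2
    apply le_trans (natDegree_add_le _ _)
    apply max_le
    · apply le_trans (natDegree_mul_le)
      have h1 : (4 * X : ℝ[X]).natDegree ≤ 1 := by compute_degree
      have h2 : (derivative (cv n)).natDegree ≤ n + 1 - 1 :=
        le_trans (natDegree_derivative_le _) (by have := ih; omega)
      omega
    · apply le_trans (natDegree_mul_le)
      have h1 : (5 - 4 * X : ℝ[X]).natDegree ≤ 1 := by compute_degree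
      omega

noncomputable def qcv (r j : ℕ) : ℝ[X] := ∑ m ∈ Finset.range (2*r), C (Bcv m j) * X^m

lemma coeff_qcv (r j m : ℕ) :
    (qcv r j).coeff m = if m < 2*r then Bcv m j else 0 := by
  rw [qcv, Polynomial.finset_sum_coeff]
  have : ∀ k ∈ Finset.range (2*r), (C (Bcv k j) * X^k).coeff m
      = if k = m then Bcv k j else 0 := by
    intro k _
    rw [Polynomial.coeff_C_mul, Polynomial.coeff_X_pow, mul_ite, mul_one, mul_zero]
    exact if_congr eq_comm rfl rfl
  rw [Finset.sum_congr rfl this, Finset.sum_ite_eq' (Finset.range (2*r)) m (fun k => Bcv k j)]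
  simp [Finset.mem_range]

lemma coeff_qcv_lt (r j m : ℕ) (h : m < j) : (qcv r j).coeff m = 0 := by
  rw [coeff_qcv]
  split
  · rw [Bcv, if_neg (by omega)]
  · rfl

-- decomposition
lemma cv_decomp (r : ℕ) (a b : Fin r) :
    cv ((a:ℕ) + (b:ℕ)) = ∑ j ∈ Finset.range (2*r), C (xcv j ^ ((a:ℕ)+(b:ℕ))) * qcv r j := by
  have hab : (a:ℕ) + (b:ℕ) + 1 < 2*r := by omega
  ext m
  rw [Polynomial.finset_sum_coeff]
  simp only [Polynomial.coeff_C_mul, coeff_qcv]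
  rcases Nat.lt_or_ge m (2*r) with hm | hm
  · simp only [if_pos hm]
    rw [coeff_cv]
    rw [Finset.sum_subset (Finset.range_subset_range.2 (by omega : m + 1 ≤ 2*r))]
    · exact Finset.sum_congr rfl (fun j _ => by ring)
    · intro j _ hj
      rw [Finset.mem_range, not_lt] at hj
      rw [Bcv, if_neg (by omega), zero_mul]
  · simp only [if_neg (not_lt.2 hm), mul_zero, Finset.sum_const_zero]
    apply Polynomial.coeff_eq_zero_of_natDegree_lt
    exact lt_of_le_of_lt (natDegree_cv _) (by omega)

theorem stmt_17 (r : ℕ) (hr : 1 ≤ r) :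
    (Matrix.det (Matrix.of fun a b : Fin r => cv ((a:ℕ) + (b:ℕ)))).coeff (r * (r-1) / 2)
      = (∏ j ∈ Finset.range r, ((-1 : ℝ)^(j+1) * (2*j + 3) / j.factorial))
        * (Matrix.det (Matrix.of fun i j : Fin r => ((5 + 4*(i:ℕ) : ℝ))^(j:ℕ)))^2 := by
  classical
  set N := r * (r-1) / 2 with hNdef
  have hN : N = ∑ i ∈ Finset.range r, i := by
    have := Finset.sum_range_id_mul_two r
    omega
  set Vmat : Matrix (Fin r) (Fin r) ℝ := Matrix.of fun i j : Fin r => xcv (i:ℕ) ^ (j:ℕ)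
    with hVmat
  set Vdet : ℝ := Vmat.det with hVdet
  set g : Fin r → ℕ → (Fin r → ℝ[X]) :=
    fun a j b => C (xcv j ^ ((a:ℕ)+(b:ℕ))) * qcv r j with hg
  -- Step 1 : expand the determinant by multilinearity
  have hdet : Matrix.det (Matrix.of fun a b : Fin r => cv ((a:ℕ) + (b:ℕ)))
      = ∑ f ∈ Fintype.piFinset (fun _ : Fin r => Finset.range (2*r)),
          Matrix.det (Matrix.of fun a b : Fin r => C (xcv (f a) ^ ((a:ℕ)+(b:ℕ))) * qcv r (f a)) := by
    have h0 : (Matrix.of fun a b : Fin r => cv ((a:ℕ) + (b:ℕ)))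
        = fun a => ∑ j ∈ Finset.range (2*r), g a j := by
      funext a b
      rw [Finset.sum_apply]
      simp only [hg]
      show cv ((a:ℕ)+(b:ℕ)) = _
      rw [cv_decomp r a b]
    show Matrix.detRowAlternating _ = _
    rw [h0]
    exact (Matrix.detRowAlternating (R := ℝ[X]) (n := Fin r)).toMultilinearMap.map_sum_finset
      g (fun _ => Finset.range (2*r))
  -- Step 2 : evaluate each inner determinant
  have hinner : ∀ f : Fin r → ℕ,
      Matrix.det (Matrix.of fun a b : Fin r => C (xcv (f a) ^ ((a:ℕ)+(b:ℕ))) * qcv r (f a))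
        = (∏ a : Fin r, (C (xcv (f a)) ^ (a:ℕ) * qcv r (f a)))
            * C (Matrix.det (Matrix.of fun a b : Fin r => xcv (f a) ^ (b:ℕ))) := by
    intro f
    have h1 : (Matrix.of fun a b : Fin r => C (xcv (f a) ^ ((a:ℕ)+(b:ℕ))) * qcv r (f a))
        = Matrix.of (fun a b : Fin r =>
            (C (xcv (f a)) ^ (a:ℕ) * qcv r (f a)) *
              (Matrix.of fun a b : Fin r => C (xcv (f a) ^ (b:ℕ))) a b) := by
      funext a b
      simp only [Matrix.of_apply]
      rw [pow_add, map_mul, map_pow]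
      ring
    rw [h1, Matrix.det_mul_column (fun a : Fin r => C (xcv (f a)) ^ (a:ℕ) * qcv r (f a))
      (Matrix.of fun a b : Fin r => C (xcv (f a) ^ (b:ℕ)))]
    congr 1
    have h2 : (Matrix.of fun a b : Fin r => C (xcv (f a) ^ (b:ℕ)))
        = (C : ℝ →+* ℝ[X]).mapMatrix (Matrix.of fun a b : Fin r => xcv (f a) ^ (b:ℕ)) := by
      funext a b; rfl
    rw [h2, ← RingHom.map_det]
  -- coefficient of each term
  have hterm : ∀ f : Fin r → ℕ,
      ((∏ a : Fin r, (C (xcv (f a)) ^ (a:ℕ) * qcv r (f a)))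
        * C (Matrix.det (Matrix.of fun a b : Fin r => xcv (f a) ^ (b:ℕ)))).coeff N
      = (∏ a : Fin r, xcv (f a) ^ (a:ℕ))
          * Matrix.det (Matrix.of fun a b : Fin r => xcv (f a) ^ (b:ℕ))
          * (∏ a : Fin r, qcv r (f a)).coeff N := by
    intro f
    rw [Finset.prod_mul_distrib]
    have hC : (∏ a : Fin r, C (xcv (f a)) ^ (a:ℕ))
        = C (∏ a : Fin r, xcv (f a) ^ (a:ℕ)) := by
      rw [map_prod]
      exact Finset.prod_congr rfl
        (fun a _ => (map_pow (C : ℝ →+* ℝ[X]) (xcv (f a)) (a:ℕ)).symm)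
    rw [hC]
    rw [show (C (∏ a : Fin r, xcv (f a) ^ (a:ℕ)) * (∏ a : Fin r, qcv r (f a)))
          * C (Matrix.det (Matrix.of fun a b : Fin r => xcv (f a) ^ (b:ℕ)))
        = C ((∏ a : Fin r, xcv (f a) ^ (a:ℕ))
              * Matrix.det (Matrix.of fun a b : Fin r => xcv (f a) ^ (b:ℕ)))
            * (∏ a : Fin r, qcv r (f a)) from by rw [map_mul]; ring]
    rw [Polynomial.coeff_C_mul]
  -- the summand as a function of f
  set T : (Fin r → ℕ) → ℝ := fun f =>
    (∏ a : Fin r, xcv (f a) ^ (a:ℕ))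
      * Matrix.det (Matrix.of fun a b : Fin r => xcv (f a) ^ (b:ℕ))
      * (∏ a : Fin r, qcv r (f a)).coeff N with hT
  have hmain : (Matrix.det (Matrix.of fun a b : Fin r => cv ((a:ℕ) + (b:ℕ)))).coeff N
      = ∑ f ∈ Fintype.piFinset (fun _ : Fin r => Finset.range (2*r)), T f := by
    rw [hdet, Polynomial.finset_sum_coeff]
    apply Finset.sum_congr rfl
    intro f _
    rw [hinner f, hterm f]
  -- Step 3 : only permutations contribute
  set e : Equiv.Perm (Fin r) → (Fin r → ℕ) := fun σ a => (σ a : ℕ) with he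
  have himage : Finset.image e Finset.univ
      ⊆ Fintype.piFinset (fun _ : Fin r => Finset.range (2*r)) := by
    intro f hf
    rw [Finset.mem_image] at hf
    obtain ⟨σ, _, rfl⟩ := hf
    rw [Fintype.mem_piFinset]
    intro a
    simp only [he]
    rw [Finset.mem_range]
    have := (σ a).isLt
    omega
  have hzero : ∀ f ∈ Fintype.piFinset (fun _ : Fin r => Finset.range (2*r)),
      f ∉ Finset.image e Finset.univ → T f = 0 := by
    intro f _ hfe
    by_cases hinj : Function.Injective f
    · set S : Finset ℕ := Finset.image f Finset.univ with hS
      have hcard : S.card = r := by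
        rw [hS, Finset.card_image_of_injective _ hinj, Finset.card_univ, Fintype.card_fin]
      have hsum : ∑ s ∈ S, s = ∑ a : Fin r, f a := by
        rw [hS, Finset.sum_image (fun x _ y _ h => hinj h)]
      rcases finset_nat_sum_lemma r S hcard with hSr | hlt
      · exfalso
        apply hfe
        have hflt : ∀ a, f a < r := by
          intro a
          have : f a ∈ S := Finset.mem_image_of_mem f (Finset.mem_univ a)
          rw [hSr, Finset.mem_range] at this
          exact this
        set gg : Fin r → Fin r := fun a => ⟨f a, hflt a⟩ with hgg
        have hginj : Function.Injective gg := by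
          intro x y hxy
          exact hinj (congrArg Fin.val hxy)
        have hgbij : Function.Bijective gg := (Finite.injective_iff_bijective).1 hginj
        refine Finset.mem_image.2 ⟨Equiv.ofBijective gg hgbij, Finset.mem_univ _, ?_⟩
        funext a
        rfl
      · have hlt' : N < ∑ a : Fin r, f a := by
          rw [hN]
          calc ∑ i ∈ Finset.range r, i < ∑ s ∈ S, s := hlt
          _ = ∑ a : Fin r, f a := hsum
        have h0 := coeff_prod_zero_of_lt Finset.univ (fun a => qcv r (f a)) (fun a => f a)
          (fun a _ m hm => coeff_qcv_lt r (f a) m hm) N hlt'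
        rw [hT]
        simp only
        rw [h0, mul_zero]
    · rw [Function.not_injective_iff] at hinj
      obtain ⟨x, y, hfxy, hxy⟩ := hinj
      have hdet0 : Matrix.det (Matrix.of fun a b : Fin r => xcv (f a) ^ (b:ℕ)) = 0 := by
        apply Matrix.det_zero_of_row_eq hxy
        funext b
        show xcv (f x) ^ (b:ℕ) = xcv (f y) ^ (b:ℕ)
        rw [hfxy]
      rw [hT]
      simp only
      rw [hdet0, mul_zero, zero_mul]
  have hrestrict : ∑ f ∈ Fintype.piFinset (fun _ : Fin r => Finset.range (2*r)), T f
      = ∑ σ : Equiv.Perm (Fin r), T (e σ) := by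
    rw [← Finset.sum_subset himage hzero]
    rw [Finset.sum_image]
    intro σ _ τ _ hστ
    exact Equiv.ext fun a => Fin.val_injective (congrFun hστ a)
  -- Step 4 : evaluate T (e σ)
  have hPA : ∀ σ : Equiv.Perm (Fin r),
      (∏ a : Fin r, qcv r (e σ a)).coeff N = ∏ j ∈ Finset.range r, Acv j := by
    intro σ
    simp only [he]
    have hNsum : N = ∑ a : Fin r, ((σ a : ℕ)) := by
      rw [hN, Finset.sum_range (fun i => i),
        ← Equiv.sum_comp σ (fun a : Fin r => (a:ℕ))]
    rw [hNsum, coeff_prod_order Finset.univ (fun a => qcv r ((σ a : ℕ)))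
      (fun a => (σ a : ℕ)) (fun a _ m hm => coeff_qcv_lt r _ m hm)]
    have hq : ∀ a : Fin r, (qcv r ((σ a : ℕ))).coeff ((σ a : ℕ)) = Acv ((σ a : ℕ)) := by
      intro a
      rw [coeff_qcv, if_pos (by have := (σ a).isLt; omega), Bcv, if_pos le_rfl,
        Nat.sub_self, Nat.factorial_zero, Nat.cast_one, div_one]
    rw [Finset.prod_congr rfl (fun a _ => hq a)]
    rw [Equiv.prod_comp σ (fun a : Fin r => Acv (a:ℕ))]
    rw [← Finset.prod_range (fun j => Acv j)]
  have hVperm : ∀ σ : Equiv.Perm (Fin r),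
      Matrix.det (Matrix.of fun a b : Fin r => xcv (e σ a) ^ (b:ℕ))
        = ((Equiv.Perm.sign σ : ℤ) : ℝ) * Vdet := by
    intro σ
    have hsub : (Matrix.of fun a b : Fin r => xcv (e σ a) ^ (b:ℕ)) = Vmat.submatrix σ id := by
      funext a b
      rfl
    rw [hsub, Matrix.det_permute]
  -- Step 5 : sum over permutations
  rw [hmain, hrestrict]
  have hfinal : ∑ σ : Equiv.Perm (Fin r), T (e σ)
      = (∏ j ∈ Finset.range r, Acv j) * Vdet * Vdet := by
    have hTσ : ∀ σ : Equiv.Perm (Fin r), T (e σ)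
        = (∏ j ∈ Finset.range r, Acv j) * Vdet *
            (((Equiv.Perm.sign σ : ℤ) : ℝ) * ∏ a : Fin r, xcv ((σ a : ℕ)) ^ (a:ℕ)) := by
      intro σ
      rw [hT]
      simp only
      rw [hPA σ, hVperm σ]
      simp only [he]
      ring
    rw [Finset.sum_congr rfl (fun σ _ => hTσ σ), ← Finset.mul_sum]
    congr 1
    rw [hVdet, Matrix.det_apply]
    apply Finset.sum_congr rfl
    intro σ _
    rw [Units.smul_def, zsmul_eq_mul]
    rfl
  rw [hfinal]
  have hAcv : (∏ j ∈ Finset.range r, Acv j)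
      = ∏ j ∈ Finset.range r, ((-1 : ℝ)^(j+1) * (2*j + 3) / j.factorial) := by
    apply Finset.prod_congr rfl
    intro j _
    rw [Acv]
  rw [hAcv, sq]
  have hVd : Matrix.det (Matrix.of fun i j : Fin r => ((5 + 4*(i:ℕ) : ℝ))^(j:ℕ)) = Vdet := by
    rw [hVdet, hVmat]
    rfl
  rw [hVd]
  ring
end
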